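/- For a finite simple connected cubic graph G, the P3-hull number of G equals the decycling number of G, i.e., the minimum cardinality of a P3-hull set equals the minimum cardinality of a vertex set whose removal leaves an acyclic graph. -/

import Mathlib

open SimpleGraph

def infectStep {V : Type*} (G : SimpleGraph V) (S : Set V) : Set V :=
  S ∪ {v | ∃ a b, a ≠ b ∧ a ∈ S ∧ b ∈ S ∧ G.Adj v a ∧ G.Adj v b}

def infectIter {V : Type*} (G : SimpleGraph V) (S : Set V) : ℕ → Set V
  | 0 => S
  | p + 1 => infectStep G (infectIter G S p)

def IsHullSet {V : Type*} (G : SimpleGraph V) (S : Set V) : Prop :=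
  ∃ p, infectIter G S p = Set.univ

noncomputable def hullNumber {V : Type*} (G : SimpleGraph V) : ℕ :=
  sInf {m | ∃ S : Set V, S.ncard = m ∧ IsHullSet G S}

noncomputable def infectTime {V : Type*} (G : SimpleGraph V) (S : Set V) : ℕ :=
  sInf {p | infectIter G S p = Set.univ}

def IsCubic {V : Type*} (G : SimpleGraph V) : Prop :=
  ∀ v, {w | G.Adj v w}.ncard = 3

def IsDecyclingSet {V : Type*} (G : SimpleGraph V) (S : Set V) : Prop :=
  (G.induce Sᶜ).IsAcyclic

noncomputable def decyclingNumber {V : Type*} (G : SimpleGraph V) : ℕ :=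
  sInf {m | ∃ S : Set V, S.ncard = m ∧ IsDecyclingSet G S}

def pHull {V : Type*} (G : SimpleGraph V) (S : Set V) : Set V :=
  ⋃ p, infectIter G S p

noncomputable def graphDiam {V : Type*} (G : SimpleGraph V) : ℕ :=
  sSup {d | ∃ a b, d = G.dist a b}

noncomputable def maxCompDiam {V : Type*} (G : SimpleGraph V) : ℕ :=
  sSup {d | ∃ c : G.ConnectedComponent, d = graphDiam (G.induce c.supp)}

def genPetersen (n k : ℕ) [NeZero n] : SimpleGraph (Fin n ⊕ Fin n) :=
  SimpleGraph.fromRel fun x y =>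
    match x, y with
    | Sum.inl i, Sum.inl j => j = i + 1
    | Sum.inl i, Sum.inr j => i = j
    | Sum.inr i, Sum.inr j => j = i + Fin.ofNat n k
    | _, _ => False


section Aux

open SimpleGraph Walk

variable {W : Type*} {H : SimpleGraph W}

lemma support_getElem_eq_getVert {x y : W} (p : H.Walk x y) :
    ∀ (i : ℕ) (hi : i < p.support.length), p.support[i] = p.getVert i := by
  induction p with
  | nil =>
    intro i hi
    simp only [Walk.support_nil, List.length_singleton] at hi
    interval_cases i
    simp [Walk.support_nil, Walk.getVert_zero]
  | cons h q ih =>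
    intro i hi
    cases i with
    | zero => simp [Walk.support_cons, Walk.getVert_zero]
    | succ n =>
      simp only [Walk.support_cons, List.getElem_cons_succ, Walk.getVert_cons_succ]
      exact ih n (by simp only [Walk.support_cons, List.length_cons] at hi; omega)

lemma cycle_getVert_inj {u : W} {c : H.Walk u u} (hc : c.IsCycle)
    {i j : ℕ} (hi1 : 1 ≤ i) (hi2 : i ≤ c.length) (hj1 : 1 ≤ j) (hj2 : j ≤ c.length)
    (h : c.getVert i = c.getVert j) : i = j := by
  have hnd : c.support.tail.Nodup := hc.support_nodup
  have hls : c.support.length = c.length + 1 := c.length_support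
  have hlt : c.support.tail.length = c.length := by
    simp [List.length_tail, hls]
  have e : ∀ k, ∀ hk : k - 1 < c.support.tail.length, 1 ≤ k →
      c.support.tail[k-1]'hk = c.getVert k := by
    intro k hk hk1
    obtain ⟨k', rfl⟩ : ∃ k', k = k' + 1 := ⟨k - 1, by omega⟩
    rw [List.getElem_tail]
    simp only [Nat.add_sub_cancel]
    exact support_getElem_eq_getVert c (k' + 1) (by omega)
  have hij : c.support.tail[i-1]'(by omega) = c.support.tail[j-1]'(by omega) := by
    rw [e i (by omega) hi1, e j (by omega) hj1]; exact h
  have := (List.Nodup.getElem_inj_iff hnd).mp hij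
  omega

lemma cycle_two_nbrs {u : W} {c : H.Walk u u} (hc : c.IsCycle) {v : W}
    (hv : v ∈ c.support) :
    ∃ a b, a ≠ b ∧ a ∈ c.support ∧ b ∈ c.support ∧ H.Adj v a ∧ H.Adj v b := by
  obtain ⟨i, hiv, hile⟩ := Walk.mem_support_iff_exists_getVert.mp hv
  have h3 := hc.three_le_length
  have hmem : ∀ k, k ≤ c.length → c.getVert k ∈ c.support := fun k hk =>
    Walk.mem_support_iff_exists_getVert.mpr ⟨k, rfl, hk⟩
  by_cases h0 : i = 0 ∨ i = c.length
  · have hvu : v = u := by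
      rcases h0 with rfl | rfl
      · rw [← hiv, Walk.getVert_zero]
      · rw [← hiv, Walk.getVert_length]
    refine ⟨c.getVert 1, c.getVert (c.length - 1), ?_, hmem 1 (by omega),
      hmem _ (by omega), ?_, ?_⟩
    · intro h
      have := cycle_getVert_inj hc (by omega) (by omega) (by omega) (by omega) h
      omega
    · have := c.adj_getVert_succ (i := 0) (by omega)
      rw [Walk.getVert_zero] at this
      rw [hvu]; exact this
    · have := c.adj_getVert_succ (i := c.length - 1) (by omega)
      rw [show c.length - 1 + 1 = c.length by omega, Walk.getVert_length] at this
      rw [hvu]; exact this.symm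
  · push_neg at h0
    have hi1 : 1 ≤ i := by omega
    have hilt : i < c.length := by omega
    refine ⟨c.getVert (if i = 1 then c.length else i - 1), c.getVert (i + 1), ?_,
      hmem _ (by split_ifs <;> omega), hmem (i + 1) (by omega), ?_, ?_⟩
    · intro h
      have := cycle_getVert_inj hc (i := if i = 1 then c.length else i - 1) (j := i + 1)
        (by split_ifs <;> omega) (by split_ifs <;> omega) (by omega) (by omega) h
      split_ifs at this <;> omega
    · have hge : c.getVert (if i = 1 then c.length else i - 1) = c.getVert (i - 1) := by
        by_cases h1 : i = 1
        · simp [h1, Walk.getVert_length, Walk.getVert_zero]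
        · simp [h1]
      have := c.adj_getVert_succ (i := i - 1) (by omega)
      rw [show i - 1 + 1 = i by omega, hiv] at this
      rw [hge]; exact this.symm
    · have := c.adj_getVert_succ (i := i) hilt
      rw [hiv] at this
      exact this

lemma path_start_edge {x y z : W} (p : H.Walk x y) (hp : p.IsPath)
    (he : s(x, z) ∈ p.edges) : z = p.getVert 1 := by
  cases p with
  | nil => simp at he
  | cons h q =>
    rw [Walk.edges_cons, List.mem_cons] at he
    rcases he with he | he
    · rw [Sym2.eq_iff] at he
      rcases he with ⟨-, rfl⟩ | ⟨h1, rfl⟩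
      · rw [Walk.getVert_cons_succ, Walk.getVert_zero]
      · exact absurd h1 h.ne
    · exfalso
      have hx : x ∈ q.support := Walk.fst_mem_support_of_mem_edges q he
      exact ((Walk.cons_isPath_iff _ _).mp hp).2 hx

lemma exists_cycle_of_min_degree_two [Finite W] (U : Set W) (hne : U.Nonempty)
    (h2 : ∀ v ∈ U, ∃ a b, a ≠ b ∧ a ∈ U ∧ b ∈ U ∧ H.Adj v a ∧ H.Adj v b) :
    ∃ (u : W) (c : H.Walk u u), c.IsCycle := by
  classical
  cases nonempty_fintype W
  obtain ⟨v0, hv0⟩ := hne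
  set Lset : Set ℕ := {n | ∃ (x y : W) (p : H.Walk x y),
    p.IsPath ∧ (∀ z ∈ p.support, z ∈ U) ∧ p.length = n} with hLset
  have h0 : 0 ∈ Lset := by
    refine ⟨v0, v0, Walk.nil, Walk.IsPath.nil, ?_, rfl⟩
    intro z hz
    simp only [Walk.support_nil, List.mem_singleton] at hz
    subst hz; exact hv0
  have hbdd : BddAbove Lset := by
    refine ⟨Fintype.card W, fun n hn => ?_⟩
    obtain ⟨x, y, p, hp, -, hlen⟩ := hn
    have h1 := List.Nodup.length_le_card hp.support_nodup
    rw [Walk.length_support] at h1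
    omega
  obtain ⟨x, y, p, hp, hU, hlen⟩ := Nat.sSup_mem ⟨0, h0⟩ hbdd
  have hmax : ∀ z, H.Adj y z → z ∈ U → z ∈ p.support := by
    intro z hadj hzU
    by_contra hzs
    have hmem : p.length + 1 ∈ Lset := by
      refine ⟨x, z, p.concat hadj, ?_, ?_, by rw [Walk.length_concat]⟩
      · rw [← Walk.isPath_reverse_iff, Walk.reverse_concat, Walk.cons_isPath_iff]
        refine ⟨hp.reverse, ?_⟩
        rw [Walk.support_reverse, List.mem_reverse]
        exact hzs
      · intro w hw
        rw [Walk.support_concat, List.mem_append] at hw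
        rcases hw with hw | hw
        · exact hU w hw
        · simp only [List.mem_singleton] at hw; subst hw; exact hzU
    have h2' := le_csSup hbdd hmem
    rw [hlen] at h2'
    omega
  obtain ⟨a, b, hab, haU, hbU, hya, hyb⟩ := h2 y (hU y p.end_mem_support)
  have has : a ∈ p.support := hmax a hya haU
  have hbs : b ∈ p.support := hmax b hyb hbU
  obtain ⟨c0, hc0s, hc0adj, hc0pen⟩ :
      ∃ c0, c0 ∈ p.support ∧ H.Adj y c0 ∧ c0 ≠ p.getVert (p.length - 1) := by
    by_cases hh : a = p.getVert (p.length - 1)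
    · exact ⟨b, hbs, hyb, fun h => hab (by rw [hh, ← h])⟩
    · exact ⟨a, has, hya, hh⟩
  have hq : (p.dropUntil c0 hc0s).IsPath := hp.dropUntil hc0s
  have hc0y : c0 ≠ y := hc0adj.ne'
  have hql : 1 ≤ (p.dropUntil c0 hc0s).length := by
    by_contra h
    exact hc0y (Walk.eq_of_length_eq_zero (p := p.dropUntil c0 hc0s) (by omega))
  have hspec := p.take_spec hc0s
  have hlena : (p.takeUntil c0 hc0s).length + (p.dropUntil c0 hc0s).length = p.length := by
    rw [← Walk.length_append, hspec]
  have hqpen : (p.dropUntil c0 hc0s).getVert ((p.dropUntil c0 hc0s).length - 1)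
      = p.getVert (p.length - 1) := by
    have heq : ((p.takeUntil c0 hc0s).append (p.dropUntil c0 hc0s)).getVert (p.length - 1)
        = p.getVert (p.length - 1) := by rw [hspec]
    rw [← heq, Walk.getVert_append, if_neg (by omega)]
    congr 1
    omega
  have hedge : s(y, c0) ∉ (p.dropUntil c0 hc0s).edges := by
    intro hmem
    have hrev : s(y, c0) ∈ (p.dropUntil c0 hc0s).reverse.edges := by
      rw [Walk.edges_reverse, List.mem_reverse]; exact hmem
    have h1 := path_start_edge (p.dropUntil c0 hc0s).reverse hq.reverse hrev
    rw [Walk.getVert_reverse] at h1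
    rw [hqpen] at h1
    exact hc0pen h1
  exact ⟨y, Walk.cons hc0adj (p.dropUntil c0 hc0s),
    (Walk.cons_isCycle_iff (p.dropUntil c0 hc0s) hc0adj).mpr ⟨hq, hedge⟩⟩

variable {V : Type*}

lemma infectIter_subset_succ (G : SimpleGraph V) (S : Set V) (p : ℕ) :
    infectIter G S p ⊆ infectIter G S (p + 1) :=
  Set.subset_union_left

lemma subset_infectIter (G : SimpleGraph V) (S : Set V) (p : ℕ) :
    S ⊆ infectIter G S p := by
  induction p with
  | zero => exact subset_rfl
  | succ p ih => exact ih.trans (infectIter_subset_succ G S p)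

lemma hull_isDecyc [Fintype V] {G : SimpleGraph V} (hcub : IsCubic G) {S : Set V}
    (hh : IsHullSet G S) : IsDecyclingSet G S := by
  by_contra hac
  rw [IsDecyclingSet, SimpleGraph.IsAcyclic] at hac
  push_neg at hac
  obtain ⟨v, c, hc⟩ := hac
  set ι : G.induce Sᶜ ↪g G := SimpleGraph.Embedding.induce Sᶜ with hι
  set c' : G.Walk (v : V) (v : V) := c.map ι.toHom with hc'_def
  have hc' : c'.IsCycle := hc.map ι.injective
  have hsupp : ∀ x ∈ c'.support, x ∉ S := by
    intro x hx
    replace hx : x ∈ c.support.map ι.toHom := by rw [← Walk.support_map]; exact hx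
    rw [List.mem_map] at hx
    obtain ⟨x₀, -, rfl⟩ := hx
    exact x₀.2
  have key : ∀ p, ∀ x ∈ c'.support, x ∉ infectIter G S p := by
    intro p
    induction p with
    | zero => exact fun x hx => hsupp x hx
    | succ p ih =>
      intro x hx hxI
      simp only [infectIter, infectStep, Set.mem_union, Set.mem_setOf_eq] at hxI
      rcases hxI with hxI | ⟨a, b, hab, haI, hbI, hxa, hxb⟩
      · exact ih x hx hxI
      · obtain ⟨n1, n2, hn12, hn1, hn2, ha1, ha2⟩ := cycle_two_nbrs hc' hx
        have han1 : a ≠ n1 := fun h => ih n1 hn1 (h ▸ haI)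
        have han2 : a ≠ n2 := fun h => ih n2 hn2 (h ▸ haI)
        have hbn1 : b ≠ n1 := fun h => ih n1 hn1 (h ▸ hbI)
        have hbn2 : b ≠ n2 := fun h => ih n2 hn2 (h ▸ hbI)
        have hsub : ({a, b, n1, n2} : Set V) ⊆ {w | G.Adj x w} := by
          intro w hw
          simp only [Set.mem_insert_iff, Set.mem_singleton_iff] at hw
          rcases hw with rfl | rfl | rfl | rfl
          exacts [hxa, hxb, ha1, ha2]
        have hcard : ({a, b, n1, n2} : Set V).ncard = 4 := by
          rw [Set.ncard_insert_of_notMem (by simp [hab, han1, han2]) (Set.toFinite _),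
            Set.ncard_insert_of_notMem (by simp [hbn1, hbn2]) (Set.toFinite _),
            Set.ncard_insert_of_notMem (by simp [hn12]) (Set.toFinite _),
            Set.ncard_singleton]
        have hle := Set.ncard_le_ncard hsub (Set.toFinite _)
        rw [hcard, hcub x] at hle
        omega
  obtain ⟨P, hP⟩ := hh
  have := key P (v : V) c'.start_mem_support
  rw [hP] at this
  exact this (Set.mem_univ _)

lemma decyc_isHull [Fintype V] {G : SimpleGraph V} (hcub : IsCubic G) {S : Set V}
    (hd : IsDecyclingSet G S) : IsHullSet G S := by
  have claim : ∀ p : ℕ, infectIter G S p = Set.univ ∨ p ≤ (infectIter G S p).ncard := by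
    intro p
    induction p with
    | zero => exact Or.inr (Nat.zero_le _)
    | succ p ih =>
      by_cases hu : infectIter G S p = Set.univ
      · left
        show infectStep G (infectIter G S p) = Set.univ
        rw [hu, infectStep, Set.univ_union]
      · have hcard : p ≤ (infectIter G S p).ncard := by
          rcases ih with h | h
          · exact absurd h hu
          · exact h
        right
        set I := infectIter G S p with hI
        have hne : Iᶜ.Nonempty := Set.nonempty_compl.mpr hu
        have hIS : S ⊆ I := subset_infectIter G S p
        have hsub : Iᶜ ⊆ Sᶜ := Set.compl_subset_compl.mpr hIS
        set U' : Set ↥(Sᶜ) := {x | (x : V) ∈ Iᶜ} with hU'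
        have hne' : U'.Nonempty := by
          obtain ⟨w, hw⟩ := hne
          exact ⟨⟨w, hsub hw⟩, hw⟩
        have hnotall : ¬ ∀ v ∈ U', ∃ a b, a ≠ b ∧ a ∈ U' ∧ b ∈ U' ∧
            (G.induce Sᶜ).Adj v a ∧ (G.induce Sᶜ).Adj v b := by
          intro hall
          obtain ⟨u, c, hc⟩ := exists_cycle_of_min_degree_two U' hne' hall
          exact hd c hc
        push_neg at hnotall
        obtain ⟨v, hvU, hleaf⟩ := hnotall
        have hvI : (v : V) ∉ I := hvU
        set N : Set V := {w | G.Adj (v : V) w} with hN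
        have hN3 : N.ncard = 3 := hcub (v : V)
        have hUle : (N ∩ Iᶜ).ncard ≤ 1 := by
          rw [Set.ncard_le_one (Set.toFinite _)]
          intro a ha b hb
          by_contra hab
          have haS : a ∈ Sᶜ := hsub ha.2
          have hbS : b ∈ Sᶜ := hsub hb.2
          exact hleaf ⟨a, haS⟩ ⟨b, hbS⟩ (fun h => hab (congrArg Subtype.val h))
            ha.2 hb.2 ha.1 hb.1
        have hNsplit : N = (N ∩ I) ∪ (N ∩ Iᶜ) := by
          rw [← Set.inter_union_distrib_left, Set.union_compl_self, Set.inter_univ]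
        have hle2 : 2 ≤ (N ∩ I).ncard := by
          have h1 := Set.ncard_union_le (N ∩ I) (N ∩ Iᶜ)
          rw [← hNsplit] at h1
          omega
        obtain ⟨a, haNI, b, hbNI, hab⟩ := (Set.one_lt_ncard (s := N ∩ I) (Set.toFinite _)).mp (by omega)
        have hvstep : (v : V) ∈ infectIter G S (p + 1) := by
          simp only [infectIter, infectStep, Set.mem_union, Set.mem_setOf_eq]
          exact Or.inr ⟨a, b, hab, haNI.2, hbNI.2, haNI.1, hbNI.1⟩
        have hss : I ⊂ infectIter G S (p + 1) :=
          ⟨infectIter_subset_succ G S p, fun hle => hvI (hle hvstep)⟩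
        have := Set.ncard_lt_ncard hss (Set.toFinite _)
        omega
  rcases claim (Fintype.card V) with h | h
  · exact ⟨Fintype.card V, h⟩
  · refine ⟨Fintype.card V, ?_⟩
    refine (Set.eq_of_subset_of_ncard_le (Set.subset_univ _) ?_ (Set.toFinite _)).symm.symm
    rw [Set.ncard_univ, Nat.card_eq_fintype_card]
    exact h

end Aux

theorem stmt2 {V : Type*} [Fintype V] (G : SimpleGraph V)
    (hcub : IsCubic G) (hconn : G.Connected) :
    hullNumber G = decyclingNumber G := by
  have hiff : ∀ S : Set V, IsHullSet G S ↔ IsDecyclingSet G S :=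
    fun S => ⟨hull_isDecyc hcub, decyc_isHull hcub⟩
  unfold hullNumber decyclingNumber
  congr 1
  ext m
  constructor
  · rintro ⟨S, h1, h2⟩
    exact ⟨S, h1, (hiff S).mp h2⟩
  · rintro ⟨S, h1, h2⟩
    exact ⟨S, h1, (hiff S).mpr h2⟩
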